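/- Fix w ∈ (−1,1). For every z ∈ (−1,1) with z ≠ w, the function f(z) = log( (√(1−z²)·√(1−w²) + 1 − w·z) / |z−w| ) is differentiable at z with derivative f'(z) = √(1−w²) / ( √(1−z²)·(w − z) ). -/

import Mathlib

/-- Fix `w ∈ (−1,1)`. For every `z ∈ (−1,1)` with `z ≠ w`, the defNLS kernel
`f(z) = log((√(1−z²)√(1−w²) + 1 − wz)/|z−w|)` is differentiable at `z` with
derivative `√(1−w²)/(√(1−z²)(w−z))`. -/
theorem defNLS_kernel_deriv (w : ℝ) (hw : w ∈ Set.Ioo (-1 : ℝ) 1)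
    (z : ℝ) (hz : z ∈ Set.Ioo (-1 : ℝ) 1) (hzw : z ≠ w) :
    HasDerivAt (fun z : ℝ =>
        Real.log ((Real.sqrt (1 - z ^ 2) * Real.sqrt (1 - w ^ 2) + 1 - w * z) / |z - w|))
      (Real.sqrt (1 - w ^ 2) / (Real.sqrt (1 - z ^ 2) * (w - z))) z := by
  obtain ⟨hw1, hw2⟩ := hw
  obtain ⟨hz1, hz2⟩ := hz
  set a := Real.sqrt (1 - z ^ 2) with ha_def
  set b := Real.sqrt (1 - w ^ 2) with hb_def
  have h0 : (0:ℝ) < 1 - z ^ 2 := by nlinarith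
  have h0w : (0:ℝ) < 1 - w ^ 2 := by nlinarith
  have ha : 0 < a := Real.sqrt_pos.mpr h0
  have hb : 0 < b := Real.sqrt_pos.mpr h0w
  have ha2 : a ^ 2 = 1 - z ^ 2 := Real.sq_sqrt h0.le
  have hb2 : b ^ 2 = 1 - w ^ 2 := Real.sq_sqrt h0w.le
  have hwz : w * z < 1 := by nlinarith
  have hN : 0 < a * b + 1 - w * z := by nlinarith
  have hzw' : z - w ≠ 0 := sub_ne_zero.mpr hzw
  -- derivative of the numerator
  have h1 : HasDerivAt (fun x : ℝ => 1 - x ^ 2) (-(2 * z ^ 1)) z :=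
    (hasDerivAt_pow 2 z).const_sub 1
  have hsq : HasDerivAt (fun x : ℝ => Real.sqrt (1 - x ^ 2))
      (1 / (2 * a) * (-(2 * z ^ 1))) z :=
    (Real.hasDerivAt_sqrt h0.ne').comp z h1
  have hNder : HasDerivAt (fun x : ℝ => Real.sqrt (1 - x ^ 2) * b + 1 - w * x)
      (1 / (2 * a) * (-(2 * z ^ 1)) * b - w * 1) z :=
    ((hsq.mul_const b).add_const 1).sub ((hasDerivAt_id z).const_mul w)
  have hlogN : HasDerivAt (fun x : ℝ => Real.log (Real.sqrt (1 - x ^ 2) * b + 1 - w * x))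
      ((1 / (2 * a) * (-(2 * z ^ 1)) * b - w * 1) / (a * b + 1 - w * z)) z :=
    hNder.log hN.ne'
  have hlogD : HasDerivAt (fun x : ℝ => Real.log (x - w)) (1 / (z - w)) z := by
    simpa using ((hasDerivAt_id z).sub_const w).log hzw'
  have h := hlogN.sub hlogD
  -- the original function agrees with the difference of logs near z
  have hev : (fun x : ℝ =>
      Real.log ((Real.sqrt (1 - x ^ 2) * Real.sqrt (1 - w ^ 2) + 1 - w * x) / |x - w|))
      =ᶠ[nhds z] (fun x : ℝ =>
        Real.log (Real.sqrt (1 - x ^ 2) * b + 1 - w * x) - Real.log (x - w)) := by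
    have hopen : IsOpen (Set.Ioo (-1:ℝ) 1 ∩ {x | x ≠ w}) :=
      isOpen_Ioo.inter (isOpen_compl_singleton)
    have hmem : z ∈ Set.Ioo (-1:ℝ) 1 ∩ {x | x ≠ w} := ⟨⟨hz1, hz2⟩, hzw⟩
    filter_upwards [hopen.mem_nhds hmem] with x hx
    obtain ⟨⟨hx1, hx2⟩, hxw⟩ := hx
    have hx0 : (0:ℝ) < 1 - x ^ 2 := by nlinarith
    have hax : 0 < Real.sqrt (1 - x ^ 2) := Real.sqrt_pos.mpr hx0
    have hwx : w * x < 1 := by nlinarith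
    have hNx : 0 < Real.sqrt (1 - x ^ 2) * b + 1 - w * x := by
      nlinarith [mul_nonneg hax.le hb.le]
    have hxw' : x - w ≠ 0 := sub_ne_zero.mpr hxw
    rw [← hb_def, Real.log_div hNx.ne' (abs_ne_zero.mpr hxw'), Real.log_abs]
  have hwz0 : w - z ≠ 0 := sub_ne_zero.mpr (Ne.symm hzw)
  have hkey : (1 / (2 * a) * (-(2 * z ^ 1)) * b - w * 1) / (a * b + 1 - w * z) - 1 / (z - w)
      = b / (a * (w - z)) := by
    rw [div_sub_div _ _ hN.ne' hzw', div_eq_div_iff (by positivity) (by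
      exact mul_ne_zero (by positivity) hwz0)]
    field_simp
    linear_combination ((z-w)*b) * ha2 - ((z-w)*a) * hb2
  exact hkey ▸ (h.congr_of_eventuallyEq hev)
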